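/- arXiv:math/0512277 — 2 statements merged into one kernel-verified Lean document; each statement's English description precedes it below -/
import Mathlib

section
/- Let G be a group generated by k elements x₁, …, x_k, and let α : G → ℤ be a surjective group homomorphism onto the integers (written additively). Then there exist elements x′₁, …, x′_k of G which generate G and satisfy α(x′ᵢ) = 1 for every i = 1, …, k. -/
/-- If a group `G` is generated by `k` elements and admits a surjective homomorphism
`α` onto `ℤ`, then `G` has a generating set of `k` elements each of which is sent
to `1` by `α`. -/
theorem exists_generating_set_mapping_to_one
    {G : Type*} [Group G] {k : ℕ} (x : Fin k → G)
    (hgen : Subgroup.closure (Set.range x) = ⊤)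
    (α : G → ℤ) (hα : ∀ a b : G, α (a * b) = α a + α b)
    (hsurj : Function.Surjective α) :
    ∃ x' : Fin k → G,
      Subgroup.closure (Set.range x') = ⊤ ∧ ∀ i : Fin k, α (x' i) = 1 := by
  -- basic facts about α
  have hone : α 1 = 0 := by have h := hα 1 1; rw [one_mul] at h; omega
  have hinv : ∀ g : G, α g⁻¹ = - α g := by
    intro g; have h := hα g⁻¹ g; rw [inv_mul_cancel, hone] at h; omega
  have hzpow : ∀ (g : G) (n : ℤ), α (g ^ n) = n * α g := by
    let β : G →* Multiplicative ℤ :=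
      MonoidHom.mk' (fun g => Multiplicative.ofAdd (α g)) (fun a b => by
        show Multiplicative.ofAdd (α (a * b)) = _
        rw [hα]; exact ofAdd_add _ _)
    intro g n
    have h : Multiplicative.toAdd (β (g ^ n)) = n • Multiplicative.toAdd (β g) := by
      rw [map_zpow, toAdd_zpow]
    simpa [β, MonoidHom.mk', smul_eq_mul] using h
  -- swap lemma for closures
  have hswap : ∀ y z : Fin k → G, Subgroup.closure (Set.range y) = ⊤ →
      (∀ i, y i ∈ Subgroup.closure (Set.range z)) →
      Subgroup.closure (Set.range z) = ⊤ := by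
    intro y z hy h
    rw [eq_top_iff, ← hy, Subgroup.closure_le]
    rintro _ ⟨i, rfl⟩; exact h i
  -- divisibility lemma
  have hdvd : ∀ (a : ℤ) (y : Fin k → G), Subgroup.closure (Set.range y) = ⊤ →
      (∀ i, a ∣ α (y i)) → a ∣ 1 := by
    intro a y hy hall
    obtain ⟨g1, hg1⟩ := hsurj 1
    let K : Subgroup G :=
      { carrier := {g | a ∣ α g}
        mul_mem' := fun {p q} hp hq => by
          simp only [Set.mem_setOf_eq, hα] at *; exact dvd_add hp hq
        one_mem' := by simp [hone]
        inv_mem' := fun {p} hp => by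
          simp only [Set.mem_setOf_eq, hinv] at *; exact hp.neg_right }
    have hKtop : Subgroup.closure (Set.range y) ≤ K :=
      (Subgroup.closure_le K).mpr (by rintro _ ⟨i, rfl⟩; exact hall i)
    rw [hy, top_le_iff] at hKtop
    have : g1 ∈ K := hKtop ▸ Subgroup.mem_top g1
    rw [← hg1]; exact this
  -- final adjustment: from a generating set with an element of α-value 1
  have final : ∀ y : Fin k → G, Subgroup.closure (Set.range y) = ⊤ →
      (∃ i, α (y i) = 1) →
      ∃ x' : Fin k → G,
        Subgroup.closure (Set.range x') = ⊤ ∧ ∀ i : Fin k, α (x' i) = 1 := by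
    rintro y hy ⟨i0, hi0⟩
    refine ⟨fun l => y l * (y i0) ^ (1 - α (y l)), ?_, ?_⟩
    · set x' : Fin k → G := fun l => y l * (y i0) ^ (1 - α (y l)) with hx'
      apply hswap y x' hy
      intro l
      have hxi0 : x' i0 = y i0 := by simp [hx', hi0]
      have hmem0 : y i0 ∈ Subgroup.closure (Set.range x') :=
        hxi0 ▸ Subgroup.subset_closure ⟨i0, rfl⟩
      have hrec : y l = x' l * (y i0) ^ (α (y l) - 1) := by
        rw [hx']
        dsimp only
        rw [mul_assoc, ← zpow_add]
        norm_num
      rw [hrec]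
      exact mul_mem (Subgroup.subset_closure ⟨l, rfl⟩) (zpow_mem hmem0 _)
    · intro l
      simp only [hα, hzpow, hi0]
      ring
  -- main induction
  have main : ∀ m : ℕ, ∀ y : Fin k → G, Subgroup.closure (Set.range y) = ⊤ →
      (∃ i, (α (y i)).natAbs ≠ 0 ∧ (α (y i)).natAbs ≤ m) →
      ∃ x' : Fin k → G,
        Subgroup.closure (Set.range x') = ⊤ ∧ ∀ i : Fin k, α (x' i) = 1 := by
    intro m
    induction m using Nat.strong_induction_on with
    | _ m IH =>
      rintro y hy ⟨i, hne, hle⟩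
      by_cases h1 : (α (y i)).natAbs = 1
      · rcases Int.natAbs_eq_iff.mp h1 with h | h
        · exact final y hy ⟨i, by simpa using h⟩
        · set z := Function.update y i (y i)⁻¹ with hzdef
          have hz : Subgroup.closure (Set.range z) = ⊤ := by
            apply hswap y z hy
            intro l
            by_cases hl : l = i
            · subst hl
              have hzl : z l = (y l)⁻¹ := Function.update_self _ _ _
              have : y l = (z l)⁻¹ := by rw [hzl, inv_inv]
              rw [this]
              exact inv_mem (Subgroup.subset_closure ⟨l, rfl⟩)
            · have : y l = z l := (Function.update_of_ne hl _ _).symm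
              rw [this]; exact Subgroup.subset_closure ⟨l, rfl⟩
          refine final z hz ⟨i, ?_⟩
          have hzi : z i = (y i)⁻¹ := Function.update_self _ _ _
          rw [hzi, hinv, h]
          norm_num
      · -- |α (y i)| ≥ 2 : Euclidean step
        set a := α (y i) with ha
        have hane : a ≠ 0 := fun h0 => hne (by rw [h0]; rfl)
        have hnd : ¬ a ∣ 1 := fun hd =>
          h1 (Nat.dvd_one.mp (Int.natAbs_dvd_natAbs.mpr hd))
        obtain ⟨j, hj⟩ : ∃ j, ¬ a ∣ α (y j) := by
          by_contra h; push_neg at h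
          exact hnd (hdvd a y hy h)
        have hji : j ≠ i := fun e => hj (e ▸ dvd_refl a)
        set q := α (y j) / a with hq
        set z := Function.update y j (y j * (y i) ^ (-q)) with hzdef
        have hzj : z j = y j * (y i) ^ (-q) := Function.update_self _ _ _
        have hz : Subgroup.closure (Set.range z) = ⊤ := by
          apply hswap y z hy
          intro l
          by_cases hl : l = j
          · subst hl
            have hzi : z i = y i := Function.update_of_ne (Ne.symm hji) _ _
            have : y l = z l * (z i) ^ q := by
              rw [hzi, hzj, mul_assoc, ← zpow_add, neg_add_cancel, zpow_zero, mul_one]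
            rw [this]
            exact mul_mem (Subgroup.subset_closure (Set.mem_range_self l))
              (zpow_mem (Subgroup.subset_closure (Set.mem_range_self i)) q)
          · have : y l = z l := (Function.update_of_ne hl _ _).symm
            rw [this]; exact Subgroup.subset_closure ⟨l, rfl⟩
        have hzje : α (z j) = α (y j) % a := by
          rw [hzj, hα, hzpow, ← ha, hq, Int.emod_def]
          ring
        have hrne : α (y j) % a ≠ 0 := fun h0 => hj (Int.dvd_of_emod_eq_zero h0)
        have hrlt : (α (y j) % a).natAbs < a.natAbs := by
          have h1 := Int.emod_nonneg (α (y j)) hane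
          have h2 := Int.emod_lt (α (y j)) hane
          omega
        exact IH (α (y j) % a).natAbs (lt_of_lt_of_le hrlt hle) z hz
          ⟨j, by rw [hzje]; exact ⟨Int.natAbs_ne_zero.mpr hrne, le_refl _⟩⟩
  -- start: some generator has nonzero α-value
  obtain ⟨i, hi⟩ : ∃ i, α (x i) ≠ 0 := by
    by_contra h; push_neg at h
    have := hdvd 0 x hgen (fun i => by simp [h i])
    norm_num at this
  exact main (α (x i)).natAbs x hgen ⟨i, Int.natAbs_ne_zero.mpr hi, le_refl _⟩
end

section
/- Let Δ : ℂ∖{0} → ℂ be holomorphic with Δ(t) = Δ(t⁻¹) for all t ≠ 0 and Δ(1) = 1. Let z₀ ∈ ℂ and set w = e^{2z₀}, and assume w ≠ 1 and Δ(w) = 0. Then, as t tends to 1 with t ≠ 1, the quotient Δ(t)·Δ(t·w)·Δ(t·w⁻¹) / ((t − 1)²·(t² − (w + w⁻¹)·t + 1)) tends to ((1/2)·g′(z₀))², where g(z) = Δ(e^{2z})/(e^{z} − e^{−z}). -/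
open Filter Topology Complex

/-- The analytic identity underlying the main theorem: for `Δ` holomorphic on `ℂ ∖ {0}`
with `Δ(t) = Δ(t⁻¹)` and `Δ(1) = 1`, and `w = e^{2z₀} ≠ 1` a root of `Δ`, the quotient
`Δ(t) Δ(tw) Δ(tw⁻¹) / ((t-1)² (t² - (w + w⁻¹) t + 1))` tends, as `t → 1`, `t ≠ 1`, to
`((1/2) g′(z₀))²` where `g(z) = Δ(e^{2z}) / (e^z - e^{-z})`. -/
theorem limit_nonacyclic_torsion_at_bifurcation
    (Δ : ℂ → ℂ) (hΔ : ∀ z : ℂ, z ≠ 0 → DifferentiableAt ℂ Δ z)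
    (hsym : ∀ t : ℂ, t ≠ 0 → Δ t = Δ t⁻¹) (hone : Δ 1 = 1)
    (z₀ : ℂ) (w : ℂ) (hw : w = Complex.exp (2 * z₀)) (hw1 : w ≠ 1)
    (hroot : Δ w = 0)
    (g : ℂ → ℂ)
    (hg : g = fun z : ℂ => Δ (Complex.exp (2 * z)) / (Complex.exp z - Complex.exp (-z))) :
    Filter.Tendsto
      (fun t : ℂ => Δ t * Δ (t * w) * Δ (t * w⁻¹) /
        ((t - 1) ^ 2 * (t ^ 2 - (w + w⁻¹) * t + 1)))
      (nhdsWithin 1 {(1 : ℂ)}ᶜ)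
      (nhds (((1 / 2 : ℂ) * deriv g z₀) ^ 2)) := by
  have hw0 : w ≠ 0 := by rw [hw]; exact Complex.exp_ne_zero _
  have hwi0 : w⁻¹ ≠ 0 := inv_ne_zero hw0
  have hrooti : Δ w⁻¹ = 0 := by rw [← hsym w hw0]; exact hroot
  set u : ℂ := Complex.exp z₀ with hu
  have hu0 : u ≠ 0 := Complex.exp_ne_zero _
  have huu : u * u = w := by rw [hw, hu, ← Complex.exp_add]; ring_nf
  have hw1' : u * u - 1 ≠ 0 := by rw [huu]; exact sub_ne_zero.mpr hw1
  have hden0 : u - u⁻¹ ≠ 0 := by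
    intro h
    apply hw1'
    have h2 : (u - u⁻¹) * u = u * u - 1 := by field_simp
    rw [h, zero_mul] at h2
    exact h2.symm
  -- derivative facts for Δ
  have hDw : HasDerivAt Δ (deriv Δ w) w := (hΔ w hw0).hasDerivAt
  have hDwi : HasDerivAt Δ (deriv Δ w⁻¹) w⁻¹ := (hΔ _ hwi0).hasDerivAt
  -- the symmetry relation between derivatives
  have hrel : deriv Δ w⁻¹ = -(w * w) * deriv Δ w := by
    have h1 : HasDerivAt (fun t : ℂ => Δ t⁻¹) (deriv Δ w⁻¹ * -(w ^ 2)⁻¹) w :=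
      HasDerivAt.comp w hDwi (hasDerivAt_inv hw0)
    have heq : Δ =ᶠ[nhds w] fun t : ℂ => Δ t⁻¹ := by
      filter_upwards [compl_singleton_mem_nhds hw0] with t ht
      exact hsym t ht
    have h2 : HasDerivAt Δ (deriv Δ w⁻¹ * -(w ^ 2)⁻¹) w := h1.congr_of_eventuallyEq heq
    have h3 := hDw.unique h2
    rw [h3]
    field_simp
  -- nonvanishing of the quadratic factor at t = 1
  have hq : (2 : ℂ) - (w + w⁻¹) ≠ 0 := by
    intro h
    apply sub_ne_zero.mpr hw1
    have h'' : ((2 : ℂ) - (w + w⁻¹)) * w = -(w - 1) ^ 2 := by field_simp; ring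
    rw [h, zero_mul] at h''
    exact sq_eq_zero_iff.mp (neg_eq_zero.mp h''.symm)
  -- limit 1 : Δ itself
  have hL1 : Tendsto Δ (nhdsWithin 1 {(1 : ℂ)}ᶜ) (nhds 1) := by
    have h : Tendsto Δ (nhdsWithin 1 {(1 : ℂ)}ᶜ) (nhds (Δ 1)) :=
      (hΔ 1 one_ne_zero).continuousAt.tendsto.mono_left nhdsWithin_le_nhds
    rwa [hone] at h
  -- limit 2 : slope at w
  have slope2 : HasDerivAt (fun t : ℂ => Δ (t * w)) (deriv Δ w * (1 * w)) 1 := by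
    have hDw1 : HasDerivAt Δ (deriv Δ w) ((fun t : ℂ => t * w) 1) := by simpa using hDw
    exact HasDerivAt.comp 1 hDw1 ((hasDerivAt_id (1 : ℂ)).mul_const w)
  have hL2 : Tendsto (fun t : ℂ => Δ (t * w) / (t - 1)) (nhdsWithin 1 {(1 : ℂ)}ᶜ)
      (nhds (deriv Δ w * (1 * w))) := by
    have h := hasDerivAt_iff_tendsto_slope.mp slope2
    refine h.congr fun t => ?_
    simp [slope_def_field, hroot]
  -- limit 3 : slope at w⁻¹
  have slope3 : HasDerivAt (fun t : ℂ => Δ (t * w⁻¹)) (deriv Δ w⁻¹ * (1 * w⁻¹)) 1 := by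
    have hDw1 : HasDerivAt Δ (deriv Δ w⁻¹) ((fun t : ℂ => t * w⁻¹) 1) := by simpa using hDwi
    exact HasDerivAt.comp 1 hDw1 ((hasDerivAt_id (1 : ℂ)).mul_const w⁻¹)
  have hL3 : Tendsto (fun t : ℂ => Δ (t * w⁻¹) / (t - 1)) (nhdsWithin 1 {(1 : ℂ)}ᶜ)
      (nhds (deriv Δ w⁻¹ * (1 * w⁻¹))) := by
    have h := hasDerivAt_iff_tendsto_slope.mp slope3
    refine h.congr fun t => ?_
    simp [slope_def_field, hrooti]
  -- limit 4 : quadratic factor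
  have hL4 : Tendsto (fun t : ℂ => t ^ 2 - (w + w⁻¹) * t + 1) (nhdsWithin 1 {(1 : ℂ)}ᶜ)
      (nhds (2 - (w + w⁻¹))) := by
    have hc : ContinuousAt (fun t : ℂ => t ^ 2 - (w + w⁻¹) * t + 1) 1 := by fun_prop
    have h : Tendsto (fun t : ℂ => t ^ 2 - (w + w⁻¹) * t + 1) (nhdsWithin 1 {(1 : ℂ)}ᶜ)
        (nhds ((1 : ℂ) ^ 2 - (w + w⁻¹) * 1 + 1)) :=
      hc.tendsto.mono_left nhdsWithin_le_nhds
    convert h using 2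
    ring
  have hmain : Tendsto
      (fun t : ℂ => Δ t * (Δ (t * w) / (t - 1)) * (Δ (t * w⁻¹) / (t - 1)) /
        (t ^ 2 - (w + w⁻¹) * t + 1))
      (nhdsWithin 1 {(1 : ℂ)}ᶜ)
      (nhds (1 * (deriv Δ w * (1 * w)) * (deriv Δ w⁻¹ * (1 * w⁻¹)) / (2 - (w + w⁻¹)))) :=
    ((hL1.mul hL2).mul hL3).div hL4 hq
  -- compute deriv g z₀
  have hexp2 : HasDerivAt (fun z : ℂ => Complex.exp (2 * z)) (w * 2) z₀ := by
    have h := (Complex.hasDerivAt_exp (2 * z₀)).comp z₀ ((hasDerivAt_id z₀).const_mul 2)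
    have : Complex.exp (2 * z₀) * (2 * 1) = w * 2 := by rw [← hw]; ring
    rw [this] at h
    exact h
  have hDw' : HasDerivAt Δ (deriv Δ w) ((fun z : ℂ => Complex.exp (2 * z)) z₀) := by
    rw [show (fun z : ℂ => Complex.exp (2 * z)) z₀ = w from hw.symm]
    exact hDw
  have hnum : HasDerivAt (fun z : ℂ => Δ (Complex.exp (2 * z))) (deriv Δ w * (w * 2)) z₀ :=
    HasDerivAt.comp z₀ hDw' hexp2
  have hexpneg : HasDerivAt (fun z : ℂ => Complex.exp (-z)) (Complex.exp (-z₀) * -1) z₀ :=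
    HasDerivAt.comp z₀ (Complex.hasDerivAt_exp (-z₀)) (hasDerivAt_neg z₀)
  have hden : HasDerivAt (fun z : ℂ => Complex.exp z - Complex.exp (-z))
      (Complex.exp z₀ - Complex.exp (-z₀) * -1) z₀ :=
    (Complex.hasDerivAt_exp z₀).sub hexpneg
  have hdz : Complex.exp z₀ - Complex.exp (-z₀) ≠ 0 := by
    rw [Complex.exp_neg]; exact hden0
  have hgd : HasDerivAt g
      ((deriv Δ w * (w * 2) * (Complex.exp z₀ - Complex.exp (-z₀)) -
        Δ (Complex.exp (2 * z₀)) * (Complex.exp z₀ - Complex.exp (-z₀) * -1)) /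
        (Complex.exp z₀ - Complex.exp (-z₀)) ^ 2) z₀ := by
    rw [hg]; exact hnum.div hden hdz
  have hderivg : deriv g z₀ =
      (deriv Δ w * (w * 2) * (Complex.exp z₀ - Complex.exp (-z₀)) -
        Δ (Complex.exp (2 * z₀)) * (Complex.exp z₀ - Complex.exp (-z₀) * -1)) /
        (Complex.exp z₀ - Complex.exp (-z₀)) ^ 2 := hgd.deriv
  -- identify the limit value
  have hG : deriv g z₀ = 2 * deriv Δ w * w / (u - u⁻¹) := by
    rw [hderivg, ← hw, hroot, Complex.exp_neg, ← hu]
    rw [div_eq_div_iff (pow_ne_zero 2 hden0) hden0]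
    ring
  have key : 1 * (deriv Δ w * (1 * w)) * (deriv Δ w⁻¹ * (1 * w⁻¹)) / (2 - (w + w⁻¹)) =
      ((1 / 2 : ℂ) * deriv g z₀) ^ 2 := by
    rw [hG, hrel, ← huu]
    have hq' : (2 : ℂ) - (u * u + (u * u)⁻¹) ≠ 0 := by rw [huu]; exact hq
    rw [div_eq_iff hq']
    field_simp [hu0, hden0]
    have h4 : (1 - u ^ 2 * 2 + u ^ 4 : ℂ) ≠ 0 := by
      have : (1 - u ^ 2 * 2 + u ^ 4 : ℂ) = (u * u - 1) ^ 2 := by ring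
      rw [this]; exact pow_ne_zero 2 hw1'
    linear_combination (deriv Δ (u ^ 2)) ^ 2 * mul_inv_cancel₀ h4
  rw [← key]
  refine hmain.congr' ?_
  filter_upwards [self_mem_nhdsWithin] with t ht
  have h1 : (t : ℂ) - 1 ≠ 0 := sub_ne_zero.mpr ht
  by_cases hQ : t ^ 2 - (w + w⁻¹) * t + 1 = 0
  · rw [hQ, mul_zero, div_zero, div_zero]
  · field_simp
end
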